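/- Let ν be a probability vector on S × A with ν_min := min_{(s,a)} ν(s,a) > 0. Let π be a policy, π̃ another policy, ω ∈ [0,1], π' = (1-ω)π + ωπ̃, Q : S × A → ℝ, χ = ‖H Q − H_{π̃} Q‖∞, and W = (1/2)‖Q − Q^{π}‖_ν². Then ⟨Q − Q^{π}, Q^{π} − Q^{π'}⟩_ν ≤ (8ω/((1−γ)³ √ν_min)) W + ((1−γ)/4) ω ‖Q* − Q^{π}‖∞² + ((1−γ)/4) ω χ². -/

import Mathlib

noncomputable section

/-- A policy assigns to each state a probability distribution over actions. -/
def IsPolicy {S A : Type*} [Fintype A] (π : S → A → ℝ) : Prop :=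
  (∀ s a, 0 ≤ π s a) ∧ ∀ s, ∑ a, π s a = 1

/-- A transition kernel assigns to each state-action pair a probability distribution over states. -/
def IsKernel {S A : Type*} [Fintype S] (p : S → A → S → ℝ) : Prop :=
  (∀ s a s', 0 ≤ p s a s') ∧ ∀ s a, ∑ s', p s a s' = 1

/-- Sup norm on `S × A → ℝ` (functions `S → A → ℝ`). -/
def supNorm {S A : Type*} [Fintype S] [Fintype A] [Nonempty S] [Nonempty A]
    (Q : S → A → ℝ) : ℝ :=
  Finset.univ.sup' Finset.univ_nonempty (fun sa : S × A => |Q sa.1 sa.2|)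

/-- Total variation distance between two distributions on a finite set. -/
def dTV {Ω : Type*} [Fintype Ω] (p₁ p₂ : Ω → ℝ) : ℝ :=
  (∑ x, |p₁ x - p₂ x|) / 2

/-- Weighted ℓ₂ norm with weights ν. -/
def nuNorm {S A : Type*} [Fintype S] [Fintype A] (ν : S → A → ℝ) (Q : S → A → ℝ) : ℝ :=
  Real.sqrt (∑ s, ∑ a, ν s a * (Q s a) ^ 2)

/-- Weighted ℓ₂ inner product with weights ν. -/
def nuInner {S A : Type*} [Fintype S] [Fintype A] (ν : S → A → ℝ) (Q₁ Q₂ : S → A → ℝ) : ℝ :=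
  ∑ s, ∑ a, ν s a * Q₁ s a * Q₂ s a

/-- Bellman operator associated with a policy π. -/
def bellman {S A : Type*} [Fintype S] [Fintype A]
    (p : S → A → S → ℝ) (R : S → A → ℝ) (γ : ℝ) (π : S → A → ℝ)
    (Q : S → A → ℝ) : S → A → ℝ :=
  fun s a => R s a + γ * ∑ s', p s a s' * ∑ a', π s' a' * Q s' a'

/-- Bellman optimality operator. -/
def bellmanOpt {S A : Type*} [Fintype S] [Fintype A] [Nonempty A]
    (p : S → A → S → ℝ) (R : S → A → ℝ) (γ : ℝ)
    (Q : S → A → ℝ) : S → A → ℝ :=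
  fun s a => R s a + γ * ∑ s', p s a s' *
    Finset.univ.sup' Finset.univ_nonempty (fun a' => Q s' a')

/-- Expected operator F̄(Q,π) = (I − D)Q + D H_π Q, where D has diagonal entries μ_b(s)π_b(a|s). -/
def Fbar {S A : Type*} [Fintype S] [Fintype A]
    (p : S → A → S → ℝ) (R : S → A → ℝ) (γ : ℝ)
    (μb : S → ℝ) (πb : S → A → ℝ) (π : S → A → ℝ) (Q : S → A → ℝ) : S → A → ℝ :=
  fun s a => (1 - μb s * πb s a) * Q s a + μb s * πb s a * bellman p R γ π Q s a

/-- Importance-sampling TD operator, for y = ((s₁,a₁),(s₂,a₂)). -/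
def FIS {S A : Type*} [Fintype S] [Fintype A] [DecidableEq S] [DecidableEq A]
    (R : S → A → ℝ) (γ : ℝ) (πb : S → A → ℝ)
    (Q : S → A → ℝ) (y : (S × A) × S × A) (π : S → A → ℝ) : S → A → ℝ :=
  fun s a => if (s, a) = y.1 then
      R y.1.1 y.1.2 + γ * (π y.2.1 y.2.2 / πb y.2.1 y.2.2) * Q y.2.1 y.2.2
    else Q s a

/-- Expected-TD operator, for u = (s₁,a₁,s₂). -/
def FETD {S A : Type*} [Fintype S] [Fintype A] [DecidableEq S] [DecidableEq A]
    (R : S → A → ℝ) (γ : ℝ)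
    (Q : S → A → ℝ) (u : S × A × S) (π : S → A → ℝ) : S → A → ℝ :=
  fun s a => if (s, a) = (u.1, u.2.1) then
      R u.1 u.2.1 + γ * ∑ a', π u.2.2 a' * Q u.2.2 a'
    else Q s a

/-- State transition matrix induced by a policy. -/
def Pmat {S A : Type*} [Fintype A] (p : S → A → S → ℝ) (π : S → A → ℝ) : Matrix S S ℝ :=
  Matrix.of fun s s' => ∑ a, π s a * p s a s'

end

section TVTHelpers

variable {S A : Type*} [Fintype S] [Fintype A] [Nonempty S] [Nonempty A]

lemma tvt_abs_le_supNorm (Q : S → A → ℝ) (s : S) (a : A) : |Q s a| ≤ supNorm Q :=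
  Finset.le_sup' (fun sa : S × A => |Q sa.1 sa.2|) (Finset.mem_univ (s, a))

lemma tvt_supNorm_nonneg (Q : S → A → ℝ) : 0 ≤ supNorm Q := by
  obtain ⟨s⟩ := (inferInstance : Nonempty S)
  obtain ⟨a⟩ := (inferInstance : Nonempty A)
  exact (abs_nonneg _).trans (tvt_abs_le_supNorm Q s a)

lemma tvt_supNorm_le {Q : S → A → ℝ} {c : ℝ} (h : ∀ s a, |Q s a| ≤ c) : supNorm Q ≤ c :=
  Finset.sup'_le _ _ fun sa _ => h sa.1 sa.2

lemma tvt_supNorm_sub_comm (f g : S → A → ℝ) :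
    supNorm (fun s a => f s a - g s a) = supNorm (fun s a => g s a - f s a) := by
  unfold supNorm
  refine Finset.sup'_congr _ rfl fun sa _ => abs_sub_comm _ _

lemma tvt_sum_mul_sub {ι : Type*} [Fintype ι] (w f g : ι → ℝ) :
    ∑ i, w i * (f i - g i) = (∑ i, w i * f i) - ∑ i, w i * g i := by
  rw [← Finset.sum_sub_distrib]
  exact Finset.sum_congr rfl fun i _ => by ring

lemma tvt_weighted_abs_le {ι : Type*} [Fintype ι] {w f : ι → ℝ} {c : ℝ}
    (hw : ∀ i, 0 ≤ w i) (hs : ∑ i, w i = 1) (hf : ∀ i, |f i| ≤ c) :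
    |∑ i, w i * f i| ≤ c := by
  calc |∑ i, w i * f i| ≤ ∑ i, |w i * f i| := Finset.abs_sum_le_sum_abs _ _
    _ ≤ ∑ i, w i * c := Finset.sum_le_sum fun i _ => by
        rw [abs_mul, abs_of_nonneg (hw i)]
        exact mul_le_mul_of_nonneg_left (hf i) (hw i)
    _ = c := by rw [← Finset.sum_mul, hs, one_mul]

lemma tvt_bellman_contraction (p : S → A → S → ℝ) (hp : IsKernel p) (R : S → A → ℝ)
    {γ : ℝ} (hγ0 : 0 ≤ γ) (π : S → A → ℝ) (hπ : IsPolicy π) (Q₁ Q₂ : S → A → ℝ) :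
    supNorm (fun s a => bellman p R γ π Q₁ s a - bellman p R γ π Q₂ s a)
      ≤ γ * supNorm (fun s a => Q₁ s a - Q₂ s a) := by
  set c := supNorm (fun s a => Q₁ s a - Q₂ s a) with hc
  apply tvt_supNorm_le
  intro s a
  have h1 : bellman p R γ π Q₁ s a - bellman p R γ π Q₂ s a
      = γ * ∑ s', p s a s' * ∑ a', π s' a' * (Q₁ s' a' - Q₂ s' a') := by
    simp only [bellman]
    rw [show (∑ s', p s a s' * ∑ a', π s' a' * (Q₁ s' a' - Q₂ s' a'))
        = (∑ s', p s a s' * ∑ a', π s' a' * Q₁ s' a')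
          - ∑ s', p s a s' * ∑ a', π s' a' * Q₂ s' a' from ?_]
    · ring
    · rw [← Finset.sum_sub_distrib]
      refine Finset.sum_congr rfl fun s' _ => ?_
      rw [tvt_sum_mul_sub]; ring
  rw [h1, abs_mul, abs_of_nonneg hγ0]
  refine mul_le_mul_of_nonneg_left ?_ hγ0
  refine tvt_weighted_abs_le (fun s' => hp.1 s a s') (hp.2 s a) fun s' => ?_
  exact tvt_weighted_abs_le (fun a' => hπ.1 s' a') (hπ.2 s') fun a' =>
    tvt_abs_le_supNorm (fun s a => Q₁ s a - Q₂ s a) s' a'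

lemma tvt_abs_sup'_sub_sup'_le {ι : Type*} [Fintype ι] [Nonempty ι] (f g : ι → ℝ) {c : ℝ}
    (h : ∀ i, |f i - g i| ≤ c) :
    |Finset.univ.sup' Finset.univ_nonempty f - Finset.univ.sup' Finset.univ_nonempty g| ≤ c := by
  rw [abs_sub_le_iff]
  constructor
  · obtain ⟨i, -, hi⟩ := Finset.exists_mem_eq_sup' (Finset.univ_nonempty (α := ι)) f
    have h1 := (abs_sub_le_iff.mp (h i)).1
    have h2 : g i ≤ Finset.univ.sup' Finset.univ_nonempty g := Finset.le_sup' g (Finset.mem_univ i)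
    rw [hi]; linarith
  · obtain ⟨i, -, hi⟩ := Finset.exists_mem_eq_sup' (Finset.univ_nonempty (α := ι)) g
    have h1 := (abs_sub_le_iff.mp (h i)).2
    have h2 : f i ≤ Finset.univ.sup' Finset.univ_nonempty f := Finset.le_sup' f (Finset.mem_univ i)
    rw [hi]; linarith

lemma tvt_bellmanOpt_contraction (p : S → A → S → ℝ) (hp : IsKernel p) (R : S → A → ℝ)
    {γ : ℝ} (hγ0 : 0 ≤ γ) (Q₁ Q₂ : S → A → ℝ) :
    supNorm (fun s a => bellmanOpt p R γ Q₁ s a - bellmanOpt p R γ Q₂ s a)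
      ≤ γ * supNorm (fun s a => Q₁ s a - Q₂ s a) := by
  set c := supNorm (fun s a => Q₁ s a - Q₂ s a) with hc
  apply tvt_supNorm_le
  intro s a
  have h1 : bellmanOpt p R γ Q₁ s a - bellmanOpt p R γ Q₂ s a
      = γ * ∑ s', p s a s' *
        (Finset.univ.sup' Finset.univ_nonempty (fun a' => Q₁ s' a')
          - Finset.univ.sup' Finset.univ_nonempty (fun a' => Q₂ s' a')) := by
    simp only [bellmanOpt]
    rw [tvt_sum_mul_sub]; ring
  rw [h1, abs_mul, abs_of_nonneg hγ0]
  refine mul_le_mul_of_nonneg_left ?_ hγ0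
  refine tvt_weighted_abs_le (fun s' => hp.1 s a s') (hp.2 s a) fun s' => ?_
  exact tvt_abs_sup'_sub_sup'_le _ _ fun a' =>
    tvt_abs_le_supNorm (fun s a => Q₁ s a - Q₂ s a) s' a'

lemma tvt_wavg_le_sup' (π : S → A → ℝ) (hπ : IsPolicy π) (f : S → A → ℝ) (s : S) :
    ∑ a, π s a * f s a ≤ Finset.univ.sup' Finset.univ_nonempty (fun a => f s a) := by
  calc ∑ a, π s a * f s a
      ≤ ∑ a, π s a * Finset.univ.sup' Finset.univ_nonempty (fun a => f s a) :=
        Finset.sum_le_sum fun a _ =>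
          mul_le_mul_of_nonneg_left (Finset.le_sup' (fun a => f s a) (Finset.mem_univ a)) (hπ.1 s a)
    _ = Finset.univ.sup' Finset.univ_nonempty (fun a => f s a) := by
        rw [← Finset.sum_mul, hπ.2 s, one_mul]

lemma tvt_nonneg_of_ge_discounted (p : S → A → S → ℝ) (hp : IsKernel p)
    {γ : ℝ} (hγ0 : 0 ≤ γ) (hγ1 : γ < 1)
    (π : S → A → ℝ) (hπ : IsPolicy π) (f : S → A → ℝ)
    (hf : ∀ s a, γ * ∑ s', p s a s' * ∑ a', π s' a' * f s' a' ≤ f s a) :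
    ∀ s a, 0 ≤ f s a := by
  obtain ⟨sa₀, -, hmin⟩ := Finset.exists_mem_eq_inf'
    (Finset.univ_nonempty (α := S × A)) (fun sa : S × A => f sa.1 sa.2)
  set m := Finset.univ.inf' Finset.univ_nonempty (fun sa : S × A => f sa.1 sa.2) with hm
  have hlb : ∀ s a, m ≤ f s a := fun s a =>
    Finset.inf'_le (fun sa : S × A => f sa.1 sa.2) (Finset.mem_univ (s, a))
  have hsum_ge : γ * m ≤ γ * ∑ s', p sa₀.1 sa₀.2 s' * ∑ a', π s' a' * f s' a' := by
    refine mul_le_mul_of_nonneg_left ?_ hγ0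
    have inner_ge : ∀ s', m ≤ ∑ a', π s' a' * f s' a' := by
      intro s'
      calc m = ∑ a', π s' a' * m := by rw [← Finset.sum_mul, hπ.2 s', one_mul]
        _ ≤ ∑ a', π s' a' * f s' a' := Finset.sum_le_sum fun a' _ =>
            mul_le_mul_of_nonneg_left (hlb s' a') (hπ.1 s' a')
    calc m = ∑ s', p sa₀.1 sa₀.2 s' * m := by rw [← Finset.sum_mul, hp.2 sa₀.1 sa₀.2, one_mul]
      _ ≤ _ := Finset.sum_le_sum fun s' _ =>
          mul_le_mul_of_nonneg_left (inner_ge s') (hp.1 sa₀.1 sa₀.2 s')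
  have hkey : γ * m ≤ m := le_trans hsum_ge ((hf sa₀.1 sa₀.2).trans_eq hmin.symm)
  have hm0 : 0 ≤ m := by nlinarith
  exact fun s a => le_trans hm0 (hlb s a)

end TVTHelpers

set_option maxHeartbeats 1000000 in
/-- Bound on the time-varying-target term T₃ (Lemma A.4 / lem:target). -/
theorem time_varying_target_bound {S A : Type*} [Fintype S] [Fintype A] [Nonempty S] [Nonempty A]
    (p : S → A → S → ℝ) (hp : IsKernel p)
    (R : S → A → ℝ) (hR : ∀ s a, 0 ≤ R s a ∧ R s a ≤ 1)
    (γ : ℝ) (hγ : 0 < γ ∧ γ < 1)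
    (ν : S → A → ℝ) (hνpos : ∀ s a, 0 < ν s a) (hνsum : ∑ s, ∑ a, ν s a = 1)
    (νmin : ℝ)
    (hνmin : νmin = Finset.univ.inf' Finset.univ_nonempty (fun sa : S × A => ν sa.1 sa.2))
    (π πt : S → A → ℝ) (hπ : IsPolicy π) (hπt : IsPolicy πt)
    (ω : ℝ) (hω : 0 ≤ ω ∧ ω ≤ 1)
    (Q Qstar Qpi Qpi' : S → A → ℝ)
    (hQstar : bellmanOpt p R γ Qstar = Qstar)
    (hQpi : bellman p R γ π Qpi = Qpi)
    (hQpi' : bellman p R γ (fun s a => (1 - ω) * π s a + ω * πt s a) Qpi' = Qpi')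
    (χ : ℝ)
    (hχ : χ = supNorm (fun s a => bellmanOpt p R γ Q s a - bellman p R γ πt Q s a))
    (W : ℝ)
    (hW : W = (1 / 2) * nuNorm ν (fun s a => Q s a - Qpi s a) ^ 2) :
    nuInner ν (fun s a => Q s a - Qpi s a) (fun s a => Qpi s a - Qpi' s a)
      ≤ (8 * ω / ((1 - γ) ^ 3 * Real.sqrt νmin)) * W
        + ((1 - γ) / 4) * ω * supNorm (fun s a => Qstar s a - Qpi s a) ^ 2
        + ((1 - γ) / 4) * ω * χ ^ 2 := by
  obtain ⟨hγ0, hγ1⟩ := hγ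
  obtain ⟨hω0, hω1⟩ := hω
  have hg0 : (0:ℝ) < 1 - γ := by linarith
  set π' : S → A → ℝ := fun s a => (1 - ω) * π s a + ω * πt s a with hπ'def
  have hπ'pol : IsPolicy π' := by
    constructor
    · intro s a
      exact add_nonneg (mul_nonneg (by linarith) (hπ.1 s a)) (mul_nonneg hω0 (hπt.1 s a))
    · intro s
      show ∑ a, ((1 - ω) * π s a + ω * πt s a) = 1
      rw [Finset.sum_add_distrib, ← Finset.mul_sum, ← Finset.mul_sum, hπ.2 s, hπt.2 s]; ring
  have hQpi_pt : ∀ s a, bellman p R γ π Qpi s a = Qpi s a :=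
    fun s a => congrFun (congrFun hQpi s) a
  have hQpi'_pt : ∀ s a, bellman p R γ π' Qpi' s a = Qpi' s a :=
    fun s a => congrFun (congrFun hQpi' s) a
  have hQstar_pt : ∀ s a, bellmanOpt p R γ Qstar s a = Qstar s a :=
    fun s a => congrFun (congrFun hQstar s) a
  set f : S → A → ℝ := fun s a => Q s a - Qpi s a with hfdef
  set x := nuNorm ν f with hxdef
  set xi := supNorm f with hxidef
  set M := supNorm (fun s a => Qstar s a - Qpi s a) with hMdef
  set D := supNorm (fun s a => bellman p R γ πt Qpi s a - Qpi s a) with hDdef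
  set E := supNorm (fun s a => Qpi s a - Qpi' s a) with hEdef
  set r := Real.sqrt νmin with hrdef
  have hx0 : 0 ≤ x := Real.sqrt_nonneg _
  have hxi0 : 0 ≤ xi := tvt_supNorm_nonneg _
  have hM0 : 0 ≤ M := tvt_supNorm_nonneg _
  have hD0 : 0 ≤ D := tvt_supNorm_nonneg _
  have hE0 : 0 ≤ E := tvt_supNorm_nonneg _
  have hχ0 : 0 ≤ χ := hχ ▸ tvt_supNorm_nonneg _
  have hνminpos : 0 < νmin := by
    rw [hνmin]
    exact (Finset.lt_inf'_iff _).mpr fun sa _ => hνpos sa.1 sa.2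
  have hνm_le : ∀ s a, νmin ≤ ν s a := by
    intro s a
    rw [hνmin]
    exact Finset.inf'_le (fun sa : S × A => ν sa.1 sa.2) (Finset.mem_univ (s, a))
  have hνmin_le1 : νmin ≤ 1 := by
    obtain ⟨s₀⟩ := (inferInstance : Nonempty S)
    obtain ⟨a₀⟩ := (inferInstance : Nonempty A)
    have h1 : ν s₀ a₀ ≤ ∑ a, ν s₀ a :=
      Finset.single_le_sum (fun a _ => (hνpos s₀ a).le) (Finset.mem_univ a₀)
    have h2 : (∑ a, ν s₀ a) ≤ ∑ s, ∑ a, ν s a :=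
      Finset.single_le_sum (fun s _ => Finset.sum_nonneg fun a _ => (hνpos s a).le)
        (Finset.mem_univ s₀)
    have := hνm_le s₀ a₀
    linarith [hνsum ▸ (h1.trans h2)]
  have hr0 : 0 < r := Real.sqrt_pos.mpr hνminpos
  have hr1 : r ≤ 1 := Real.sqrt_le_one.mpr hνmin_le1
  have hx2 : x ^ 2 = ∑ s, ∑ a, ν s a * f s a ^ 2 := by
    rw [hxdef]
    simp only [nuNorm]
    exact Real.sq_sqrt (Finset.sum_nonneg fun s _ =>
      Finset.sum_nonneg fun a _ => mul_nonneg (hνpos s a).le (sq_nonneg _))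
  have hsum_le : ∀ s a, ν s a * f s a ^ 2 ≤ ∑ s', ∑ a', ν s' a' * f s' a' ^ 2 := by
    intro s a
    have inner : ν s a * f s a ^ 2 ≤ ∑ a', ν s a' * f s a' ^ 2 :=
      Finset.single_le_sum (fun a' _ => mul_nonneg (hνpos s a').le (sq_nonneg _))
        (Finset.mem_univ a)
    have outer : (∑ a', ν s a' * f s a' ^ 2) ≤ ∑ s', ∑ a', ν s' a' * f s' a' ^ 2 :=
      Finset.single_le_sum (fun s' _ => Finset.sum_nonneg fun a' _ =>
        mul_nonneg (hνpos s' a').le (sq_nonneg _)) (Finset.mem_univ s)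
    linarith
  have hrpt : ∀ s a, r * |f s a| ≤ x := by
    intro s a
    have e : r * |f s a| = Real.sqrt (νmin * f s a ^ 2) := by
      rw [Real.sqrt_mul hνminpos.le, Real.sqrt_sq_eq_abs]
    have hle : νmin * f s a ^ 2 ≤ x ^ 2 := by
      have h1 : νmin * f s a ^ 2 ≤ ν s a * f s a ^ 2 :=
        mul_le_mul_of_nonneg_right (hνm_le s a) (sq_nonneg _)
      have := hsum_le s a
      linarith [hx2]
    have := Real.sqrt_le_sqrt hle
    rw [Real.sqrt_sq hx0] at this
    linarith [e ▸ this]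
  have hrx : r * xi ≤ x := by
    have hxile : xi ≤ x / r := by
      apply tvt_supNorm_le
      intro s a
      rw [le_div_iff₀ hr0]
      have := hrpt s a
      linarith
    calc r * xi ≤ r * (x / r) := mul_le_mul_of_nonneg_left hxile hr0.le
      _ = x := by field_simp
  -- Step A : nuInner ≤ x * E
  have hstepA : nuInner ν f (fun s a => Qpi s a - Qpi' s a) ≤ x * E := by
    have hterm : ∀ s a, ν s a * f s a * (Qpi s a - Qpi' s a) ≤ ν s a * |f s a| * E := by
      intro s a
      have h1 : ν s a * f s a * (Qpi s a - Qpi' s a)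
          ≤ |ν s a * f s a * (Qpi s a - Qpi' s a)| := le_abs_self _
      have h2 : |ν s a * f s a * (Qpi s a - Qpi' s a)|
          = ν s a * |f s a| * |Qpi s a - Qpi' s a| := by
        rw [abs_mul, abs_mul, abs_of_nonneg (hνpos s a).le]
      have h3 : |Qpi s a - Qpi' s a| ≤ E :=
        tvt_abs_le_supNorm (fun s a => Qpi s a - Qpi' s a) s a
      have h4 : 0 ≤ ν s a * |f s a| := mul_nonneg (hνpos s a).le (abs_nonneg _)
      calc ν s a * f s a * (Qpi s a - Qpi' s a)
          ≤ ν s a * |f s a| * |Qpi s a - Qpi' s a| := h2 ▸ h1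
        _ ≤ ν s a * |f s a| * E := mul_le_mul_of_nonneg_left h3 h4
    have hCS : (∑ s, ∑ a, ν s a * |f s a|) ≤ x := by
      have key := Finset.sum_mul_sq_le_sq_mul_sq Finset.univ
        (fun sa : S × A => Real.sqrt (ν sa.1 sa.2))
        (fun sa : S × A => Real.sqrt (ν sa.1 sa.2) * |f sa.1 sa.2|)
      have k1 : (∑ sa : S × A, Real.sqrt (ν sa.1 sa.2) * (Real.sqrt (ν sa.1 sa.2) * |f sa.1 sa.2|))
          = ∑ s, ∑ a, ν s a * |f s a| := by
        rw [Fintype.sum_prod_type]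
        exact Finset.sum_congr rfl fun s _ => Finset.sum_congr rfl fun a _ => by
          rw [← mul_assoc, Real.mul_self_sqrt (hνpos s a).le]
      have k2 : (∑ sa : S × A, Real.sqrt (ν sa.1 sa.2) ^ 2) = ∑ s, ∑ a, ν s a := by
        rw [Fintype.sum_prod_type]
        exact Finset.sum_congr rfl fun s _ => Finset.sum_congr rfl fun a _ =>
          Real.sq_sqrt (hνpos s a).le
      have k3 : (∑ sa : S × A, (Real.sqrt (ν sa.1 sa.2) * |f sa.1 sa.2|) ^ 2)
          = ∑ s, ∑ a, ν s a * f s a ^ 2 := by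
        rw [Fintype.sum_prod_type]
        exact Finset.sum_congr rfl fun s _ => Finset.sum_congr rfl fun a _ => by
          rw [mul_pow, Real.sq_sqrt (hνpos s a).le, sq_abs]
      rw [k1, k2, k3, hνsum, one_mul] at key
      have hLHS0 : 0 ≤ ∑ s, ∑ a, ν s a * |f s a| :=
        Finset.sum_nonneg fun s _ => Finset.sum_nonneg fun a _ =>
          mul_nonneg (hνpos s a).le (abs_nonneg _)
      nlinarith only [key, hx2, hx0, hLHS0]
    calc nuInner ν f (fun s a => Qpi s a - Qpi' s a)
        = ∑ s, ∑ a, ν s a * f s a * (Qpi s a - Qpi' s a) := rfl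
      _ ≤ ∑ s, ∑ a, ν s a * |f s a| * E :=
          Finset.sum_le_sum fun s _ => Finset.sum_le_sum fun a _ => hterm s a
      _ = (∑ s, ∑ a, ν s a * |f s a|) * E := by
          rw [Finset.sum_mul]
          exact Finset.sum_congr rfl fun s _ => by rw [Finset.sum_mul]
      _ ≤ x * E := mul_le_mul_of_nonneg_right hCS hE0
  -- Step B : (1-γ) E ≤ ω D
  have hπ'lin : ∀ s a, bellman p R γ π' Qpi s a - bellman p R γ π Qpi s a
      = ω * (bellman p R γ πt Qpi s a - bellman p R γ π Qpi s a) := by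
    intro s a
    simp only [hπ'def, bellman]
    have houter : ∑ s', p s a s' * ∑ a', ((1 - ω) * π s' a' + ω * πt s' a') * Qpi s' a'
        = (1 - ω) * (∑ s', p s a s' * ∑ a', π s' a' * Qpi s' a')
          + ω * ∑ s', p s a s' * ∑ a', πt s' a' * Qpi s' a' := by
      rw [Finset.mul_sum, Finset.mul_sum, ← Finset.sum_add_distrib]
      refine Finset.sum_congr rfl fun s' _ => ?_
      have hsum : ∑ a', ((1 - ω) * π s' a' + ω * πt s' a') * Qpi s' a'
          = (1 - ω) * (∑ a', π s' a' * Qpi s' a') + ω * ∑ a', πt s' a' * Qpi s' a' := by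
        rw [Finset.mul_sum, Finset.mul_sum, ← Finset.sum_add_distrib]
        exact Finset.sum_congr rfl fun a' _ => by ring
      rw [hsum]; ring
    rw [houter]; ring
  have hE : (1 - γ) * E ≤ ω * D := by
    have hEle : E ≤ ω * D + γ * E := by
      apply tvt_supNorm_le
      intro s a
      have h1 := hπ'lin s a
      have h2 := hQpi_pt s a
      have h3 := hQpi'_pt s a
      have hid : Qpi s a - Qpi' s a
          = -(ω * (bellman p R γ πt Qpi s a - Qpi s a))
            + (bellman p R γ π' Qpi s a - bellman p R γ π' Qpi' s a) := by
        linear_combination h3 - h1 - (1 - ω) * h2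
      have hcontr : |bellman p R γ π' Qpi s a - bellman p R γ π' Qpi' s a| ≤ γ * E :=
        (tvt_abs_le_supNorm
          (fun s a => bellman p R γ π' Qpi s a - bellman p R γ π' Qpi' s a) s a).trans
          (tvt_bellman_contraction p hp R hγ0.le π' hπ'pol Qpi Qpi')
      have hD1 : |bellman p R γ πt Qpi s a - Qpi s a| ≤ D :=
        tvt_abs_le_supNorm (fun s a => bellman p R γ πt Qpi s a - Qpi s a) s a
      have habs : |Qpi s a - Qpi' s a|
          ≤ ω * |bellman p R γ πt Qpi s a - Qpi s a|
            + |bellman p R γ π' Qpi s a - bellman p R γ π' Qpi' s a| := by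
        rw [hid]
        calc |_ + _| ≤ |(-(ω * (bellman p R γ πt Qpi s a - Qpi s a)))|
              + |bellman p R γ π' Qpi s a - bellman p R γ π' Qpi' s a| := abs_add_le _ _
          _ = ω * |bellman p R γ πt Qpi s a - Qpi s a|
              + |bellman p R γ π' Qpi s a - bellman p R γ π' Qpi' s a| := by
            rw [abs_neg, abs_mul, abs_of_nonneg hω0]
      have := mul_le_mul_of_nonneg_left hD1 hω0
      calc |Qpi s a - Qpi' s a| ≤ _ := habs
        _ ≤ ω * D + γ * E := by linarith
    linarith
  -- Qpi ≤ Qstar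
  have hQpile : ∀ s a, Qpi s a ≤ Qstar s a := by
    have h := tvt_nonneg_of_ge_discounted p hp hγ0.le hγ1 π hπ
      (fun s a => Qstar s a - Qpi s a) ?_
    · intro s a; linarith [h s a]
    · intro s a
      have e1 : Qstar s a - Qpi s a
          = γ * ∑ s', p s a s' *
            ((Finset.univ.sup' Finset.univ_nonempty fun a' => Qstar s' a')
              - ∑ a', π s' a' * Qpi s' a') := by
        conv_lhs => rw [← hQstar_pt s a, ← hQpi_pt s a]
        simp only [bellman, bellmanOpt]
        rw [tvt_sum_mul_sub]; ring
      calc γ * ∑ s', p s a s' * ∑ a', π s' a' * (Qstar s' a' - Qpi s' a')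
          ≤ γ * ∑ s', p s a s' *
            ((Finset.univ.sup' Finset.univ_nonempty fun a' => Qstar s' a')
              - ∑ a', π s' a' * Qpi s' a') := by
            refine mul_le_mul_of_nonneg_left
              (Finset.sum_le_sum fun s' _ => mul_le_mul_of_nonneg_left ?_ (hp.1 s a s')) hγ0.le
            rw [tvt_sum_mul_sub]
            have := tvt_wavg_le_sup' π hπ Qstar s'
            linarith
        _ = Qstar s a - Qpi s a := e1.symm
  -- Step C : D ≤ 2 γ xi + χ + M
  have hD : D ≤ 2 * γ * xi + χ + M := by
    apply tvt_supNorm_le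
    intro s a
    have hA1 : |bellman p R γ πt Qpi s a - bellman p R γ πt Q s a| ≤ γ * xi := by
      refine (tvt_abs_le_supNorm
        (fun s a => bellman p R γ πt Qpi s a - bellman p R γ πt Q s a) s a).trans ?_
      have h := tvt_bellman_contraction p hp R hγ0.le πt hπt Qpi Q
      rw [tvt_supNorm_sub_comm Qpi Q] at h
      calc (supNorm fun s a => bellman p R γ πt Qpi s a - bellman p R γ πt Q s a)
          ≤ γ * supNorm (fun s a => Q s a - Qpi s a) := h
        _ = γ * xi := by rw [hxidef, hfdef]
    have hA2 : |bellman p R γ πt Q s a - bellmanOpt p R γ Q s a| ≤ χ := by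
      rw [abs_sub_comm, hχ]
      exact tvt_abs_le_supNorm (fun s a => bellmanOpt p R γ Q s a - bellman p R γ πt Q s a) s a
    have hA3 : |bellmanOpt p R γ Q s a - bellmanOpt p R γ Qpi s a| ≤ γ * xi :=
      (tvt_abs_le_supNorm
        (fun s a => bellmanOpt p R γ Q s a - bellmanOpt p R γ Qpi s a) s a).trans
        (tvt_bellmanOpt_contraction p hp R hγ0.le Q Qpi)
    have hA4 : |bellmanOpt p R γ Qpi s a - Qpi s a| ≤ M := by
      have h4a : Qpi s a ≤ bellmanOpt p R γ Qpi s a := by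
        conv_lhs => rw [← hQpi_pt s a]
        simp only [bellman, bellmanOpt]
        refine add_le_add_right (mul_le_mul_of_nonneg_left
          (Finset.sum_le_sum fun s' _ => mul_le_mul_of_nonneg_left ?_ (hp.1 s a s')) hγ0.le) _
        exact tvt_wavg_le_sup' π hπ Qpi s'
      have h4b : bellmanOpt p R γ Qpi s a ≤ Qstar s a := by
        conv_rhs => rw [← hQstar_pt s a]
        simp only [bellmanOpt]
        refine add_le_add_right (mul_le_mul_of_nonneg_left
          (Finset.sum_le_sum fun s' _ => mul_le_mul_of_nonneg_left ?_ (hp.1 s a s')) hγ0.le) _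
        exact Finset.sup'_le _ _ fun a' _ =>
          le_trans (hQpile s' a') (Finset.le_sup' (fun a' => Qstar s' a') (Finset.mem_univ a'))
      have hM' : Qstar s a - Qpi s a ≤ M :=
        le_trans (le_abs_self _) (tvt_abs_le_supNorm (fun s a => Qstar s a - Qpi s a) s a)
      rw [abs_of_nonneg (by linarith)]
      linarith
    have hsplit : bellman p R γ πt Qpi s a - Qpi s a
        = (bellman p R γ πt Qpi s a - bellman p R γ πt Q s a)
          + (bellman p R γ πt Q s a - bellmanOpt p R γ Q s a)
          + (bellmanOpt p R γ Q s a - bellmanOpt p R γ Qpi s a)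
          + (bellmanOpt p R γ Qpi s a - Qpi s a) := by ring
    calc |bellman p R γ πt Qpi s a - Qpi s a|
        ≤ |bellman p R γ πt Qpi s a - bellman p R γ πt Q s a|
          + |bellman p R γ πt Q s a - bellmanOpt p R γ Q s a|
          + |bellmanOpt p R γ Q s a - bellmanOpt p R γ Qpi s a|
          + |bellmanOpt p R γ Qpi s a - Qpi s a| := by
          rw [hsplit]
          exact (abs_add_le _ _).trans (add_le_add_left ((abs_add_le _ _).trans
            (add_le_add_left (abs_add_le _ _) _)) _)
      _ ≤ 2 * γ * xi + χ + M := by linarith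
  -- final arithmetic
  have hgI : (1 - γ) * nuInner ν f (fun s a => Qpi s a - Qpi' s a) ≤ ω * (x * D) := by
    have t1 : (1 - γ) * nuInner ν f (fun s a => Qpi s a - Qpi' s a) ≤ (1 - γ) * (x * E) :=
      mul_le_mul_of_nonneg_left hstepA hg0.le
    have t2 : x * ((1 - γ) * E) ≤ x * (ω * D) := mul_le_mul_of_nonneg_left hE hx0
    nlinarith only [t1, t2]
  have h1 : ω * (x * D) ≤ ω * x * (2 * γ * xi + χ + M) := by
    have := mul_le_mul_of_nonneg_left hD (mul_nonneg hω0 hx0)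
    linarith only [this]
  have hxx : r * (x * xi) ≤ x ^ 2 := by nlinarith only [hrx, hx0, hxi0]
  have haux : γ * (1 - γ) ^ 2 ≤ 1 := by nlinarith only [hγ0, hγ1, hg0, mul_pos hγ0 hg0, sq_nonneg (1 - γ)]
  have hy3 : (1 - γ) ^ 2 * r * (ω * x * (2 * γ * xi)) ≤ 2 * ω * x ^ 2 := by
    have c1 : (0:ℝ) ≤ 2 * γ * ω * (1 - γ) ^ 2 := by positivity
    have t1 := mul_le_mul_of_nonneg_left hxx c1
    have t2 : 2 * γ * ω * (1 - γ) ^ 2 * x ^ 2 ≤ 2 * ω * x ^ 2 := by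
      nlinarith only [mul_nonneg (mul_nonneg hω0 (sq_nonneg x))
        (show (0:ℝ) ≤ 1 - γ * (1 - γ) ^ 2 by linarith only [haux])]
    linarith only [t1, t2]
  have hy1 : (1 - γ) ^ 2 * r * (ω * x * χ) ≤ ω * x ^ 2 + ((1 - γ) ^ 4 * r / 4) * ω * χ ^ 2 := by
    nlinarith only [mul_nonneg hω0 (sq_nonneg (x - (1 - γ) ^ 2 * r * χ / 2)),
      mul_nonneg (mul_nonneg (mul_nonneg hω0 (pow_nonneg hg0.le 4)) (sq_nonneg χ))
        (show (0:ℝ) ≤ 1 - r by linarith only [hr1]), hr0.le]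
  have hy2 : (1 - γ) ^ 2 * r * (ω * x * M) ≤ ω * x ^ 2 + ((1 - γ) ^ 4 * r / 4) * ω * M ^ 2 := by
    nlinarith only [mul_nonneg hω0 (sq_nonneg (x - (1 - γ) ^ 2 * r * M / 2)),
      mul_nonneg (mul_nonneg (mul_nonneg hω0 (pow_nonneg hg0.le 4)) (sq_nonneg M))
        (show (0:ℝ) ≤ 1 - r by linarith only [hr1]), hr0.le]
  have c2 : (0:ℝ) ≤ (1 - γ) ^ 2 * r := by positivity
  have u1 := mul_le_mul_of_nonneg_left hgI c2
  have u2 := mul_le_mul_of_nonneg_left h1 c2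
  have hfin : (1 - γ) ^ 3 * r * nuInner ν f (fun s a => Qpi s a - Qpi' s a)
      ≤ 4 * ω * x ^ 2 + ((1 - γ) ^ 4 * r / 4) * ω * M ^ 2
        + ((1 - γ) ^ 4 * r / 4) * ω * χ ^ 2 := by
    linarith only [u1, u2, hy1, hy2, hy3]
  have hpos : (0:ℝ) < (1 - γ) ^ 3 * r := by positivity
  calc nuInner ν f (fun s a => Qpi s a - Qpi' s a)
      ≤ (4 * ω * x ^ 2 + ((1 - γ) ^ 4 * r / 4) * ω * M ^ 2
          + ((1 - γ) ^ 4 * r / 4) * ω * χ ^ 2) / ((1 - γ) ^ 3 * r) := by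
        rw [le_div_iff₀ hpos]
        linarith only [hfin]
    _ = (8 * ω / ((1 - γ) ^ 3 * r)) * W + ((1 - γ) / 4) * ω * M ^ 2
          + ((1 - γ) / 4) * ω * χ ^ 2 := by
        rw [hW]
        field_simp
        ring
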